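/- Let n, m be positive integers and let F be a real n×n matrix, G a real n×m matrix, and P, Q real symmetric positive definite n×n matrices such that Fᵀ P + P F + Q is negative semidefinite. Let λ_min(Q) denote the smallest eigenvalue of Q, λ_max(P) the largest eigenvalue of P, and ‖PG‖ the operator norm of PG. Then for all e ∈ ℝⁿ and d ∈ ℝᵐ: 2·⟨P e, F e + G d⟩ ≤ −(λ_min(Q)/(2·λ_max(P)))·(eᵀ P e) + (2·‖PG‖²/λ_min(Q))·‖d‖². -/

import Mathlib

open scoped RealInnerProductSpace Matrix

section aux
variable {n k : ℕ}

lemma inner_toEuclideanLin (A : Matrix (Fin n) (Fin k) ℝ) (x : EuclideanSpace ℝ (Fin n))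
    (y : EuclideanSpace ℝ (Fin k)) :
    ⟪x, Matrix.toEuclideanLin A y⟫ = (x : Fin n → ℝ) ⬝ᵥ (A *ᵥ (y : Fin k → ℝ)) := by
  simp only [PiLp.inner_apply, Matrix.toEuclideanLin_apply, dotProduct, RCLike.inner_apply]
  simp only [conj_trivial]; exact Finset.sum_congr rfl fun i _ => mul_comm _ _

lemma rayleigh_bounds (A : Matrix (Fin n) (Fin n) ℝ) (hA : A.IsHermitian)
    (x : EuclideanSpace ℝ (Fin n)) [Nonempty (Fin n)] :
    (⨅ i, hA.eigenvalues i) * ‖x‖ ^ 2 ≤ ⟪x, Matrix.toEuclideanLin A x⟫ ∧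
      ⟪x, Matrix.toEuclideanLin A x⟫ ≤ (⨆ i, hA.eigenvalues i) * ‖x‖ ^ 2 := by
  set b := hA.eigenvectorBasis
  have hsym : (Matrix.toEuclideanLin A).IsSymmetric := Matrix.isHermitian_iff_isSymmetric.mp hA
  have hAb : ∀ j, Matrix.toEuclideanLin A (b j) = hA.eigenvalues j • b j := by
    intro j
    apply (WithLp.equiv 2 (Fin n → ℝ)).injective
    simpa [Matrix.toEuclideanLin_apply] using hA.mulVec_eigenvectorBasis j
  have key : ⟪x, Matrix.toEuclideanLin A x⟫ = ∑ i, hA.eigenvalues i * ⟪b i, x⟫ ^ 2 := by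
    rw [← b.sum_inner_mul_inner x (Matrix.toEuclideanLin A x)]
    refine Finset.sum_congr rfl fun i _ => ?_
    rw [← hsym (b i) x, hAb i, inner_smul_left]
    simp [real_inner_comm x (b i)]
    ring
  have hnorm : ‖x‖ ^ 2 = ∑ i, ⟪b i, x⟫ ^ 2 := by
    rw [← real_inner_self_eq_norm_sq, ← b.sum_inner_mul_inner x x]
    exact Finset.sum_congr rfl fun i _ => by rw [real_inner_comm x (b i)]; ring
  constructor
  · rw [key, hnorm, Finset.mul_sum]
    refine Finset.sum_le_sum fun i _ => ?_
    exact mul_le_mul_of_nonneg_right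
      (ciInf_le (Set.Finite.bddBelow (Set.finite_range _)) i) (sq_nonneg _)
  · rw [key, hnorm, Finset.mul_sum]
    refine Finset.sum_le_sum fun i _ => ?_
    exact mul_le_mul_of_nonneg_right
      (le_ciSup (Set.Finite.bddAbove (Set.finite_range _)) i) (sq_nonneg _)

lemma amgm_aux (c a b : ℝ) (hc : 0 < c) : 2 * (a * b) ≤ (c/2) * a^2 + 2 * b^2 / c := by
  have h := div_nonneg (sq_nonneg (c * a - 2 * b)) (by linarith : (0:ℝ) ≤ 2 * c)
  have hid : (c/2) * a^2 + 2 * b^2 / c - 2 * (a * b) = (c * a - 2 * b)^2 / (2 * c) := by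
    field_simp
    ring
  linarith

end aux

theorem stmt_11 (n m : ℕ) (hn : 0 < n) (hm : 0 < m)
    (F : Matrix (Fin n) (Fin n) ℝ) (G : Matrix (Fin n) (Fin m) ℝ)
    (P Q : Matrix (Fin n) (Fin n) ℝ) (hP : P.PosDef) (hQ : Q.PosDef)
    (hLyap : (-(Fᵀ * P + P * F + Q)).PosSemidef) :
    ∀ (e : EuclideanSpace ℝ (Fin n)) (d : EuclideanSpace ℝ (Fin m)),
      2 * ⟪Matrix.toEuclideanLin P e, Matrix.toEuclideanLin F e + Matrix.toEuclideanLin G d⟫ ≤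
        -((⨅ i, hQ.1.eigenvalues i) / (2 * ⨆ i, hP.1.eigenvalues i)) *
            ⟪e, Matrix.toEuclideanLin P e⟫ +
          2 * ‖LinearMap.toContinuousLinearMap (Matrix.toEuclideanLin (P * G))‖ ^ 2 /
            (⨅ i, hQ.1.eigenvalues i) * ‖d‖ ^ 2 := by
  intro e d
  haveI : Nonempty (Fin n) := Fin.pos_iff_nonempty.mp hn
  set lq := ⨅ i, hQ.1.eigenvalues i with hlq
  set lp := ⨆ i, hP.1.eigenvalues i with hlp
  set T := LinearMap.toContinuousLinearMap (Matrix.toEuclideanLin (P * G)) with hT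
  set N := ‖T‖ with hN
  clear_value N
  have hq_pos : 0 < lq := by
    obtain ⟨i, hi⟩ := exists_eq_ciInf_of_finite (f := hQ.1.eigenvalues)
    rw [hlq, ← hi]; exact hQ.eigenvalues_pos i
  have hp_pos : 0 < lp := by
    obtain ⟨i, hi⟩ := exists_eq_ciSup_of_finite (f := hP.1.eigenvalues)
    rw [hlp, ← hi]; exact hP.eigenvalues_pos i
  clear_value lq lp
  have hPsym : Pᵀ = P := by have h : P.IsSymm := by simpa using hP.1
                            exact h
  have hvm : ∀ x : Fin n → ℝ, x ᵥ* P = P *ᵥ x := by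
    intro x; rw [← Matrix.mulVec_transpose, hPsym]
  have e1 : ∀ (x : Fin n → ℝ) (k : ℕ) (B : Matrix (Fin n) (Fin k) ℝ) (y : Fin k → ℝ),
      x ⬝ᵥ ((P * B) *ᵥ y) = (P *ᵥ x) ⬝ᵥ (B *ᵥ y) := by
    intro x k B y
    rw [← Matrix.mulVec_mulVec, Matrix.dotProduct_mulVec, hvm]
  have e2 : ∀ x : Fin n → ℝ, x ⬝ᵥ ((Fᵀ * P) *ᵥ x) = (P *ᵥ x) ⬝ᵥ (F *ᵥ x) := by
    intro x
    rw [← Matrix.mulVec_mulVec, Matrix.dotProduct_mulVec, Matrix.vecMul_transpose,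
      dotProduct_comm]
  have h1 : 2 * ⟪Matrix.toEuclideanLin P e, Matrix.toEuclideanLin F e⟫ +
      ⟪e, Matrix.toEuclideanLin Q e⟫ ≤ 0 := by
    have h0 := hLyap.dotProduct_mulVec_nonneg ((WithLp.equiv 2 (Fin n → ℝ)) e)
    simp only [Matrix.neg_mulVec, dotProduct_neg, RCLike.re_to_real, star_trivial,
      Matrix.add_mulVec, dotProduct_add] at h0
    rw [inner_toEuclideanLin F (Matrix.toEuclideanLin P e) e, inner_toEuclideanLin Q e e]
    have hPe : ((Matrix.toEuclideanLin P e : EuclideanSpace ℝ (Fin n)) : Fin n → ℝ)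
        = P *ᵥ (e : Fin n → ℝ) := rfl
    rw [hPe]
    have h0' : (0:ℝ) ≤ -((e : Fin n → ℝ) ⬝ᵥ ((Fᵀ*P) *ᵥ e) + (e : Fin n → ℝ) ⬝ᵥ ((P*F) *ᵥ e)
        + (e : Fin n → ℝ) ⬝ᵥ (Q *ᵥ e)) := h0
    rw [e2 (e : Fin n → ℝ), e1 (e : Fin n → ℝ) n F (e : Fin n → ℝ)] at h0'
    linarith
  -- split the inner product
  have hsplit : ⟪Matrix.toEuclideanLin P e,
        Matrix.toEuclideanLin F e + Matrix.toEuclideanLin G d⟫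
      = ⟪Matrix.toEuclideanLin P e, Matrix.toEuclideanLin F e⟫
        + ⟪e, Matrix.toEuclideanLin (P * G) d⟫ := by
    rw [inner_add_right]
    congr 1
    rw [inner_toEuclideanLin G (Matrix.toEuclideanLin P e) d,
      inner_toEuclideanLin (P * G) e d, e1 (e : Fin n → ℝ) m G (d : Fin m → ℝ)]
    rfl
  -- Rayleigh bounds
  have hQr := (rayleigh_bounds Q hQ.1 e).1
  have hPr := (rayleigh_bounds P hP.1 e).2
  rw [← hlq] at hQr
  rw [← hlp] at hPr
  -- cross term bound
  have hN0 : (0:ℝ) ≤ N := by rw [hN]; exact norm_nonneg T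
  have hGbound : ⟪e, Matrix.toEuclideanLin (P * G) d⟫ ≤ ‖e‖ * (N * ‖d‖) := by
    have h4 : ⟪e, Matrix.toEuclideanLin (P * G) d⟫ ≤ ‖e‖ * ‖Matrix.toEuclideanLin (P * G) d‖ :=
      real_inner_le_norm _ _
    have h5 : ‖Matrix.toEuclideanLin (P * G) d‖ ≤ N * ‖d‖ := by rw [hN]; exact T.le_opNorm d
    exact h4.trans (mul_le_mul_of_nonneg_left h5 (norm_nonneg _))
  have hG2 : 2 * (‖e‖ * (N * ‖d‖)) ≤ (lq/2) * ‖e‖^2 + 2 * N^2 / lq * ‖d‖^2 := by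
    have h6 := amgm_aux lq ‖e‖ (N * ‖d‖) hq_pos
    have h7 : 2 * (N * ‖d‖)^2 / lq = 2 * N^2 / lq * ‖d‖^2 := by ring
    linarith
  have hc : (lq/(2*lp)) * ⟪e, Matrix.toEuclideanLin P e⟫ ≤ (lq/2) * ‖e‖^2 := by
    have h2 : (lq/(2*lp)) * ⟪e, Matrix.toEuclideanLin P e⟫ ≤ (lq/(2*lp)) * (lp * ‖e‖^2) :=
      mul_le_mul_of_nonneg_left hPr (by positivity)
    have h3 : (lq/(2*lp)) * (lp * ‖e‖^2) = (lq/2) * ‖e‖^2 := by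
      field_simp
    linarith
  rw [hsplit]
  linarith
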